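/- Let V be a vector space over a field K of characteristic zero. The canonical Lie algebra morphism from the free Lie algebra Lie(V) on V to T(V) (equipped with the commutator bracket [x,y] = x·y − y·x), induced by the inclusion of V into T(V), is injective and its image is exactly Prim(T(V)). In particular, Prim(T(V)) is isomorphic to the free Lie algebra generated by V. -/

import Mathlib

open TensorProduct

attribute [local instance 100] LieRing.ofAssociativeRing

noncomputable def taCounit (K V : Type*) [Field K] [AddCommGroup V] [Module K V] :
    TensorAlgebra K V →ₐ[K] K :=
  TensorAlgebra.lift K (0 : V →ₗ[K] K)

noncomputable def taComul (K V : Type*) [Field K] [AddCommGroup V] [Module K V] :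
    TensorAlgebra K V →ₐ[K] TensorAlgebra K V ⊗[K] TensorAlgebra K V :=
  TensorAlgebra.lift K
    (((TensorProduct.mk K (TensorAlgebra K V) (TensorAlgebra K V)).flip 1
        + TensorProduct.mk K (TensorAlgebra K V) (TensorAlgebra K V) 1)
      ∘ₗ TensorAlgebra.ι K)

namespace Stmt17

variable (K : Type*) [Field K] {V : Type*} [AddCommGroup V] [Module K V]
  {ι : Type*} (b : Module.Basis ι K V)

/-! ### Basic setup -/

/-- left-normed bracketing of a *reversed* word -/
noncomputable def dyn : List ι → FreeLieAlgebra K ι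
  | [] => 0
  | [i] => FreeLieAlgebra.of K i
  | i :: j :: t => ⁅dyn (j :: t), FreeLieAlgebra.of K i⁆

lemma dyn_cons (i : ι) (t : List ι) (ht : t ≠ []) :
    dyn K (i :: t) = ⁅dyn K t, FreeLieAlgebra.of K i⁆ := by
  match t with
  | [] => exact absurd rfl ht
  | j :: t => rfl

noncomputable def phi : FreeLieAlgebra K ι →ₗ⁅K⁆ TensorAlgebra K V :=
  FreeLieAlgebra.lift K fun i => TensorAlgebra.ι K (b i)

lemma phi_of (i : ι) : phi K b (FreeLieAlgebra.of K i) = TensorAlgebra.ι K (b i) :=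
  FreeLieAlgebra.lift_of_apply _ _

noncomputable def BB : Module.Basis (FreeMonoid ι) K (TensorAlgebra K V) := b.tensorAlgebra

lemma BB_apply (w : FreeMonoid ι) :
    BB K b w = (TensorAlgebra.equivFreeAlgebra b).symm
      (FreeMonoid.lift (FreeAlgebra.ι K) w) := by
  have h : (FreeAlgebra.equivMonoidAlgebraFreeMonoid (R:=K) (X:=ι)).symm
      (MonoidAlgebra.single w (1:K)) = FreeMonoid.lift (FreeAlgebra.ι K) w := by
    rw [FreeAlgebra.equivMonoidAlgebraFreeMonoid]
    simp [AlgEquiv.ofAlgHom, MonoidAlgebra.lift_single]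
  simp only [BB, Module.Basis.tensorAlgebra, Module.Basis.map_apply, FreeAlgebra.basisFreeMonoid,
    Finsupp.coe_basisSingleOne, AlgEquiv.toLinearEquiv_apply]
  exact congrArg _ h

lemma BB_of (i : ι) : BB K b (FreeMonoid.of i) = TensorAlgebra.ι K (b i) := by
  rw [BB_apply]; simp

lemma BB_mul (w u : FreeMonoid ι) : BB K b (w * u) = BB K b w * BB K b u := by
  simp only [BB_apply, map_mul]

lemma BB_one : BB K b 1 = 1 := by
  simp only [BB_apply, map_one]

lemma BB_ofList_concat (l : List ι) (i : ι) :
    BB K b (FreeMonoid.ofList (l ++ [i])) =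
      BB K b (FreeMonoid.ofList l) * TensorAlgebra.ι K (b i) := by
  rw [← BB_of K b i, ← BB_mul]
  rfl

/-! ### Counit -/

lemma eps_iota (v : V) : taCounit K V (TensorAlgebra.ι K v) = 0 := by
  simp [taCounit]

lemma eps_one : taCounit K V (1 : TensorAlgebra K V) = 1 := map_one _

lemma eps_algebraMap (c : K) : taCounit K V (algebraMap K (TensorAlgebra K V) c) = c := by
  simp [AlgHom.commutes]

lemma eps_BB_ne_one (w : FreeMonoid ι) (hw : w.toList ≠ []) :
    taCounit K V (BB K b w) = 0 := by
  obtain ⟨i, t, ht⟩ : ∃ i t, w.toList = i :: t := by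
    cases h : w.toList with
    | nil => exact absurd h hw
    | cons i t => exact ⟨i, t, rfl⟩
  have : w = FreeMonoid.of i * FreeMonoid.ofList t := by
    apply FreeMonoid.toList.injective
    simpa using ht
  rw [this, BB_mul, map_mul, BB_of, eps_iota, zero_mul]

/-! ### Comultiplication -/

lemma comul_iota (v : V) :
    taComul K V (TensorAlgebra.ι K v)
      = TensorAlgebra.ι K v ⊗ₜ[K] 1 + 1 ⊗ₜ[K] TensorAlgebra.ι K v := by
  simp [taComul]

/-- the counit law, on primitives -/
lemma eps_of_primitive (x : TensorAlgebra K V)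
    (hx : taComul K V x = x ⊗ₜ[K] 1 + 1 ⊗ₜ[K] x) : taCounit K V x = 0 := by
  classical
  set q : TensorAlgebra K V ⊗[K] TensorAlgebra K V →ₐ[K] TensorAlgebra K V :=
    Algebra.TensorProduct.lift ((Algebra.ofId K _).comp (taCounit K V))
      (AlgHom.id K _) (fun x y => by
        simp only [AlgHom.coe_comp, Function.comp_apply, Algebra.ofId_apply, AlgHom.coe_id, id_eq]
        exact Algebra.commute_algebraMap_left _ _) with hq
  have hqd : q.comp (taComul K V) = AlgHom.id K (TensorAlgebra K V) := by
    apply TensorAlgebra.hom_ext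
    apply LinearMap.ext; intro v
    simp only [AlgHom.comp_toLinearMap, LinearMap.coe_comp, Function.comp_apply,
      AlgHom.toLinearMap_apply, AlgHom.coe_id, LinearMap.id_coe, id_eq]
    rw [comul_iota]
    simp [hq, Algebra.TensorProduct.lift_tmul, Algebra.ofId_apply, eps_iota]
  have hx2 : x = algebraMap K _ (taCounit K V x) + x := by
    conv_lhs => rw [show x = q (taComul K V x) from by
      rw [← AlgHom.comp_apply, hqd]; rfl]
    rw [hx]
    simp [hq, Algebra.TensorProduct.lift_tmul, Algebra.ofId_apply]
  have h0 : algebraMap K (TensorAlgebra K V) (taCounit K V x) = 0 :=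
    right_eq_add.mp hx2
  have := congrArg (taCounit K V) h0
  rwa [eps_algebraMap, map_zero] at this

/-! ### Antipode -/

noncomputable def SS : TensorAlgebra K V →ₗ[K] TensorAlgebra K V :=
  (MulOpposite.opLinearEquiv K).symm.toLinearMap ∘ₗ
    (TensorAlgebra.lift K
      (-((MulOpposite.opLinearEquiv K).toLinearMap ∘ₗ TensorAlgebra.ι K))).toLinearMap

lemma SS_one : SS K (1 : TensorAlgebra K V) = 1 := by simp [SS]

lemma SS_mul (x y : TensorAlgebra K V) : SS K (x * y) = SS K y * SS K x := by simp [SS]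

lemma SS_iota (v : V) : SS K (TensorAlgebra.ι K v) = -TensorAlgebra.ι K v := by simp [SS]

/-! ### The Dynkin map and the Euler operator -/

noncomputable def DD : TensorAlgebra K V →ₗ[K] FreeLieAlgebra K ι :=
  (BB K b).constr K fun w => dyn K w.toList.reverse

lemma DD_BB (w : FreeMonoid ι) : DD K b (BB K b w) = dyn K w.toList.reverse :=
  Module.Basis.constr_basis _ _ _ _

lemma DD_one : DD K b (1 : TensorAlgebra K V) = 0 := by
  have := DD_BB K b 1
  rw [BB_one] at this
  simpa [dyn] using this

noncomputable def NN : TensorAlgebra K V →ₗ[K] TensorAlgebra K V :=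
  (BB K b).constr K fun w => (w.toList.length : K) • BB K b w

lemma NN_BB (w : FreeMonoid ι) :
    NN K b (BB K b w) = (w.toList.length : K) • BB K b w :=
  Module.Basis.constr_basis _ _ _ _

lemma NN_one : NN K b (1 : TensorAlgebra K V) = 0 := by
  have := NN_BB K b 1
  rw [BB_one] at this
  simpa using this

lemma NN_iota (i : ι) : NN K b (TensorAlgebra.ι K (b i)) = TensorAlgebra.ι K (b i) := by
  have := NN_BB K b (FreeMonoid.of i)
  rw [BB_of] at this
  simpa using this

lemma DD_mul_iota (x : TensorAlgebra K V) (i : ι) :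
    DD K b (x * TensorAlgebra.ι K (b i))
      = ⁅DD K b x, FreeLieAlgebra.of K i⁆ + taCounit K V x • FreeLieAlgebra.of K i := by
  have : (DD K b ∘ₗ LinearMap.mulRight K (TensorAlgebra.ι K (b i)))
      = (-((LieAlgebra.ad K (FreeLieAlgebra K ι)) (FreeLieAlgebra.of K i) : _) ∘ₗ DD K b)
        + (taCounit K V).toLinearMap.smulRight (FreeLieAlgebra.of K i) := by
    apply (BB K b).ext
    intro w
    simp only [LinearMap.coe_comp, Function.comp_apply, LinearMap.mulRight_apply,
      LinearMap.add_apply, LinearMap.neg_apply, LinearMap.smulRight_apply,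
      AlgHom.toLinearMap_apply, LieAlgebra.ad_apply]
    rw [← BB_of K b i, ← BB_mul, DD_BB, DD_BB]
    rcases eq_or_ne w.toList [] with h | h
    · have hw : w = 1 := FreeMonoid.toList.injective h
      subst hw
      rw [BB_one, eps_one]
      simp [dyn]
    · rw [eps_BB_ne_one K b w h]
      have : (w * FreeMonoid.of i).toList.reverse = i :: w.toList.reverse := by
        simp
      rw [this, dyn_cons _ _ _ (by simpa using h)]
      simp [lie_skew]
  have := LinearMap.congr_fun this x
  simpa using this

lemma NN_mul_iota (x : TensorAlgebra K V) (i : ι) :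
    NN K b (x * TensorAlgebra.ι K (b i))
      = NN K b x * TensorAlgebra.ι K (b i) + x * TensorAlgebra.ι K (b i) := by
  have : (NN K b ∘ₗ LinearMap.mulRight K (TensorAlgebra.ι K (b i)))
      = (LinearMap.mulRight K (TensorAlgebra.ι K (b i)) ∘ₗ NN K b)
        + LinearMap.mulRight K (TensorAlgebra.ι K (b i)) := by
    apply (BB K b).ext
    intro w
    simp only [LinearMap.coe_comp, Function.comp_apply, LinearMap.mulRight_apply,
      LinearMap.add_apply]
    rw [← BB_of K b i, ← BB_mul, NN_BB, NN_BB]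
    have : (w * FreeMonoid.of i).toList.length = w.toList.length + 1 := by simp
    rw [this]
    push_cast
    rw [add_smul, one_smul, smul_mul_assoc, BB_mul]
  have := LinearMap.congr_fun this x
  simpa using this

/-! ### Convolution identities -/

noncomputable def cS : TensorAlgebra K V ⊗[K] TensorAlgebra K V →ₗ[K] TensorAlgebra K V :=
  LinearMap.mul' K _ ∘ₗ map (SS K) LinearMap.id

noncomputable def cSN : TensorAlgebra K V ⊗[K] TensorAlgebra K V →ₗ[K] TensorAlgebra K V :=
  LinearMap.mul' K _ ∘ₗ map (SS K) (NN K b)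

lemma cS_tmul (x y : TensorAlgebra K V) : cS K (x ⊗ₜ[K] y) = SS K x * y := by
  simp [cS]

lemma cSN_tmul (x y : TensorAlgebra K V) : cSN K b (x ⊗ₜ[K] y) = SS K x * NN K b y := by
  simp [cSN]

lemma cS_mul_right1 (v : V) (t : TensorAlgebra K V ⊗[K] TensorAlgebra K V) :
    cS K (t * (TensorAlgebra.ι K v ⊗ₜ[K] 1)) = -(TensorAlgebra.ι K v * cS K t) := by
  induction t with
  | zero => simp
  | tmul x y =>
    rw [Algebra.TensorProduct.tmul_mul_tmul, cS_tmul, cS_tmul, SS_mul, SS_iota, mul_one]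
    noncomm_ring
  | add s t hs ht => rw [add_mul, map_add, hs, ht, map_add]; noncomm_ring

lemma cS_mul_right2 (v : V) (t : TensorAlgebra K V ⊗[K] TensorAlgebra K V) :
    cS K (t * ((1 : TensorAlgebra K V) ⊗ₜ[K] TensorAlgebra.ι K v)) = cS K t * TensorAlgebra.ι K v := by
  induction t with
  | zero => simp
  | tmul x y =>
    rw [Algebra.TensorProduct.tmul_mul_tmul, cS_tmul, cS_tmul, mul_one, mul_assoc]
  | add s t hs ht => rw [add_mul, map_add, hs, ht, map_add, add_mul]

lemma cSN_mul_right1 (i : ι) (t : TensorAlgebra K V ⊗[K] TensorAlgebra K V) :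
    cSN K b (t * (TensorAlgebra.ι K (b i) ⊗ₜ[K] 1))
      = -(TensorAlgebra.ι K (b i) * cSN K b t) := by
  induction t with
  | zero => simp
  | tmul x y =>
    rw [Algebra.TensorProduct.tmul_mul_tmul, cSN_tmul, cSN_tmul, SS_mul, SS_iota, mul_one]
    noncomm_ring
  | add s t hs ht => rw [add_mul, map_add, hs, ht, map_add]; noncomm_ring

lemma cSN_mul_right2 (i : ι) (t : TensorAlgebra K V ⊗[K] TensorAlgebra K V) :
    cSN K b (t * ((1 : TensorAlgebra K V) ⊗ₜ[K] TensorAlgebra.ι K (b i)))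
      = cSN K b t * TensorAlgebra.ι K (b i) + cS K t * TensorAlgebra.ι K (b i) := by
  induction t with
  | zero => simp
  | tmul x y =>
    rw [Algebra.TensorProduct.tmul_mul_tmul, cSN_tmul, cSN_tmul, cS_tmul, mul_one,
      NN_mul_iota, mul_add, mul_assoc, mul_assoc]
  | add s t hs ht =>
    rw [add_mul, map_add, hs, ht, map_add, map_add]
    noncomm_ring

include b in
/-- `S ⋆ id = η∘ε` -/
lemma cS_comul (x : TensorAlgebra K V) :
    cS K (taComul K V x) = algebraMap K _ (taCounit K V x) := by
  have aux : ∀ l : List ι, cS K (taComul K V (BB K b (FreeMonoid.ofList l)))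
      = algebraMap K _ (taCounit K V (BB K b (FreeMonoid.ofList l))) := by
    intro l
    induction l using List.reverseRecOn with
    | nil =>
      rw [show FreeMonoid.ofList ([] : List ι) = 1 from rfl, BB_one]
      rw [map_one (taComul K V), map_one (taCounit K V), Algebra.TensorProduct.one_def,
        cS_tmul, SS_one, one_mul, map_one]
    | append_singleton l i ih =>
      rw [BB_ofList_concat, map_mul (taComul K V), comul_iota, mul_add,
        map_add (cS K), cS_mul_right1, cS_mul_right2, ih,
        map_mul (taCounit K V), eps_iota, mul_zero, map_zero]
      rw [← Algebra.commutes]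
      exact neg_add_cancel _
  have h1 : x ∈ (⊤ : Submodule K (TensorAlgebra K V)) := trivial
  rw [← (BB K b).span_eq] at h1
  induction h1 using Submodule.span_induction with
  | mem x hx =>
    obtain ⟨w, rfl⟩ := hx
    have := aux w.toList
    simpa using this
  | zero => simp
  | add x y _ _ hx hy =>
    rw [map_add (taComul K V), map_add (cS K), hx, hy, map_add (taCounit K V), map_add]
  | smul c x _ hx =>
    rw [map_smul (taComul K V), map_smul (cS K), hx, map_smul (taCounit K V), smul_eq_mul,
      map_mul, ← Algebra.smul_def]

/-- `φ ∘ D = S ⋆ N` (Dynkin's identity) -/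
lemma phiDD_eq_cSN (x : TensorAlgebra K V) :
    phi K b (DD K b x) = cSN K b (taComul K V x) := by
  have aux : ∀ l : List ι, phi K b (DD K b (BB K b (FreeMonoid.ofList l)))
      = cSN K b (taComul K V (BB K b (FreeMonoid.ofList l))) := by
    intro l
    induction l using List.reverseRecOn with
    | nil =>
      rw [show FreeMonoid.ofList ([] : List ι) = 1 from rfl, BB_one, DD_one,
        map_one (taComul K V), Algebra.TensorProduct.one_def, cSN_tmul, NN_one, mul_zero,
        map_zero (phi K b)]
    | append_singleton l i ih =>
      rw [BB_ofList_concat, map_mul (taComul K V), comul_iota, mul_add,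
        map_add (cSN K b), cSN_mul_right1, cSN_mul_right2, ← ih, cS_comul K b]
      rw [DD_mul_iota, map_add (phi K b), LieHom.map_lie, map_smul (phi K b), phi_of,
        Ring.lie_def, Algebra.smul_def]
      noncomm_ring
  have h1 : x ∈ (⊤ : Submodule K (TensorAlgebra K V)) := trivial
  rw [← (BB K b).span_eq] at h1
  induction h1 using Submodule.span_induction with
  | mem x hx =>
    obtain ⟨w, rfl⟩ := hx
    have := aux w.toList
    simpa using this
  | zero => rw [map_zero (DD K b), map_zero (phi K b), map_zero (taComul K V), map_zero (cSN K b)]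
  | add x y _ _ hx hy =>
    rw [map_add (DD K b), map_add (phi K b), map_add (taComul K V), map_add (cSN K b), hx, hy]
  | smul c x _ hx =>
    rw [map_smul (DD K b), map_smul (phi K b), map_smul (taComul K V), map_smul (cSN K b), hx]

/-! ### Generation of the free Lie algebra by its generators -/

lemma lie_gen (S : LieSubalgebra K (FreeLieAlgebra K ι))
    (h : ∀ i, FreeLieAlgebra.of K i ∈ S) (a : FreeLieAlgebra K ι) : a ∈ S := by
  let g : FreeLieAlgebra K ι →ₗ⁅K⁆ S :=
    FreeLieAlgebra.lift K fun i => (⟨FreeLieAlgebra.of K i, h i⟩ : S)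
  have hcomp : S.incl.comp g = LieHom.id := by
    apply FreeLieAlgebra.hom_ext
    intro i
    simp only [LieHom.comp_apply, LieHom.id_apply, g, FreeLieAlgebra.lift_of_apply]
    rfl
  have : a = S.incl (g a) := by
    rw [show S.incl (g a) = (S.incl.comp g) a from rfl, hcomp]; rfl
  rw [this]
  exact (g a).2

/-! ### The positive part -/

noncomputable def Gplus : Submodule K (TensorAlgebra K V) :=
  Submodule.span K (⇑(BB K b) '' {w | w.toList ≠ []})

lemma Gplus_mul (x : TensorAlgebra K V) (hx : x ∈ Gplus K b) (y : TensorAlgebra K V) :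
    x * y ∈ Gplus K b := by
  induction hx using Submodule.span_induction with
  | mem x hx =>
    obtain ⟨w, hw, rfl⟩ := hx
    have hy : y ∈ (⊤ : Submodule K (TensorAlgebra K V)) := trivial
    rw [← (BB K b).span_eq] at hy
    induction hy using Submodule.span_induction with
    | mem y hy =>
      obtain ⟨u, rfl⟩ := hy
      rw [← BB_mul]
      apply Submodule.subset_span
      refine ⟨w * u, ?_, rfl⟩
      simp only [Set.mem_setOf_eq, FreeMonoid.toList_mul]
      intro hc
      exact hw (List.append_eq_nil_iff.mp hc).1
    | zero => rw [mul_zero]; exact Submodule.zero_mem _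
    | add y z _ _ hy hz => rw [mul_add]; exact Submodule.add_mem _ hy hz
    | smul c y _ hy => rw [mul_smul_comm]; exact Submodule.smul_mem _ _ hy
  | zero => rw [zero_mul]; exact Submodule.zero_mem _
  | add x z _ _ hx hz => rw [add_mul]; exact Submodule.add_mem _ hx hz
  | smul c x _ hx => rw [smul_mul_assoc]; exact Submodule.smul_mem _ _ hx

lemma eps_Gplus (x : TensorAlgebra K V) (hx : x ∈ Gplus K b) : taCounit K V x = 0 := by
  induction hx using Submodule.span_induction with
  | mem x hx =>
    obtain ⟨w, hw, rfl⟩ := hx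
    exact eps_BB_ne_one K b w hw
  | zero => exact map_zero _
  | add x y _ _ hx hy => rw [map_add, hx, hy, add_zero]
  | smul c x _ hx => rw [map_smul, hx, smul_zero]

lemma phi_mem_Gplus (a : FreeLieAlgebra K ι) : phi K b a ∈ Gplus K b := by
  let S : LieSubalgebra K (FreeLieAlgebra K ι) :=
    { carrier := {a | phi K b a ∈ Gplus K b}
      add_mem' := fun ha hb => by
        simp only [Set.mem_setOf_eq, map_add (phi K b)] at *
        exact Submodule.add_mem _ ha hb
      zero_mem' := by simp only [Set.mem_setOf_eq, map_zero (phi K b)]; exact Submodule.zero_mem _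
      smul_mem' := fun c x hx => by
        simp only [Set.mem_setOf_eq, map_smul (phi K b)] at *
        exact Submodule.smul_mem _ _ hx
      lie_mem' := fun {x y} hx hy => by
        simp only [Set.mem_setOf_eq, LieHom.map_lie] at *
        rw [Ring.lie_def]
        exact Submodule.sub_mem _ (Gplus_mul K b _ hx _) (Gplus_mul K b _ hy _) }
  refine lie_gen K (S := S) (fun i => ?_) a
  show phi K b (FreeLieAlgebra.of K i) ∈ Gplus K b
  rw [phi_of, ← BB_of]
  exact Submodule.subset_span ⟨FreeMonoid.of i, by simp, rfl⟩

/-! ### The key bracket identity -/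

lemma DD_mul_phi (c : FreeLieAlgebra K ι) :
    ∀ y ∈ Gplus K b, DD K b (y * phi K b c) = ⁅DD K b y, c⁆ := by
  let S : LieSubalgebra K (FreeLieAlgebra K ι) :=
    { carrier := {c | ∀ y ∈ Gplus K b, DD K b (y * phi K b c) = ⁅DD K b y, c⁆}
      add_mem' := fun {x y} hx hy => by
        intro z hz
        simp only [Set.mem_setOf_eq] at hx hy
        rw [map_add (phi K b), mul_add, map_add, hx z hz, hy z hz, lie_add]
      zero_mem' := by
        intro z hz
        simp only [Set.mem_setOf_eq, map_zero (phi K b), mul_zero, map_zero, lie_zero]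
      smul_mem' := fun t x hx => by
        intro z hz
        simp only [Set.mem_setOf_eq] at hx
        rw [map_smul (phi K b), mul_smul_comm, map_smul, hx z hz, lie_smul]
      lie_mem' := fun {x y} hx hy => by
        intro z hz
        simp only [Set.mem_setOf_eq] at hx hy
        rw [LieHom.map_lie, Ring.lie_def, mul_sub, map_sub, ← mul_assoc, ← mul_assoc,
          hy (z * phi K b x) (Gplus_mul K b z hz _),
          hx (z * phi K b y) (Gplus_mul K b z hz _),
          hx z hz, hy z hz, leibniz_lie, sub_eq_add_neg, lie_skew] }
  intro y hy
  refine lie_gen K (S := S) (fun i => ?_) c y hy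
  intro z hz
  show DD K b (z * phi K b (FreeLieAlgebra.of K i)) = _
  rw [phi_of, DD_mul_iota, eps_Gplus K b z hz, zero_smul, add_zero]

/-! ### The Euler operator on the free Lie algebra -/

noncomputable def EE : FreeLieAlgebra K ι →ₗ[K] FreeLieAlgebra K ι :=
  DD K b ∘ₗ (phi K b : FreeLieAlgebra K ι →ₗ[K] TensorAlgebra K V)

lemma EE_apply (a : FreeLieAlgebra K ι) : EE K b a = DD K b (phi K b a) := rfl

lemma EE_of (i : ι) : EE K b (FreeLieAlgebra.of K i) = FreeLieAlgebra.of K i := by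
  rw [EE_apply, phi_of, ← BB_of, DD_BB]
  simp [dyn]

lemma EE_lie (a c : FreeLieAlgebra K ι) :
    EE K b ⁅a, c⁆ = ⁅EE K b a, c⁆ + ⁅a, EE K b c⁆ := by
  rw [EE_apply, LieHom.map_lie, Ring.lie_def, map_sub,
    DD_mul_phi K b c _ (phi_mem_Gplus K b a), DD_mul_phi K b a _ (phi_mem_Gplus K b c),
    ← EE_apply, ← EE_apply, sub_eq_add_neg, ← lie_skew a (EE K b c)]

lemma NN_mul (x y : TensorAlgebra K V) :
    NN K b (x * y) = NN K b x * y + x * NN K b y := by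
  have key : ∀ w u : FreeMonoid ι, NN K b (BB K b w * BB K b u)
      = NN K b (BB K b w) * BB K b u + BB K b w * NN K b (BB K b u) := by
    intro w u
    rw [← BB_mul, NN_BB, NN_BB, NN_BB, smul_mul_assoc, mul_smul_comm, ← add_smul, BB_mul]
    congr 1
    push_cast [FreeMonoid.toList_mul, List.length_append]
    ring
  have hx : x ∈ (⊤ : Submodule K (TensorAlgebra K V)) := trivial
  rw [← (BB K b).span_eq] at hx
  induction hx using Submodule.span_induction with
  | mem x hx =>
    obtain ⟨w, rfl⟩ := hx
    have hy : y ∈ (⊤ : Submodule K (TensorAlgebra K V)) := trivial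
    rw [← (BB K b).span_eq] at hy
    induction hy using Submodule.span_induction with
    | mem y hy => obtain ⟨u, rfl⟩ := hy; exact key w u
    | zero => simp
    | add y z _ _ hy hz =>
      simp only [mul_add, map_add, hy, hz]; abel
    | smul c y _ hy =>
      simp only [mul_smul_comm, map_smul, hy, smul_add, smul_mul_assoc]
  | zero => simp
  | add x z _ _ hx hz =>
    simp only [add_mul, map_add, hx, hz]; abel
  | smul c x _ hx =>
    simp only [smul_mul_assoc, map_smul, hx, smul_add, mul_smul_comm]

lemma NN_lie (x y : TensorAlgebra K V) :
    NN K b ⁅x, y⁆ = ⁅NN K b x, y⁆ + ⁅x, NN K b y⁆ := by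
  rw [Ring.lie_def, map_sub, NN_mul, NN_mul, Ring.lie_def, Ring.lie_def]
  abel

lemma phi_EE (a : FreeLieAlgebra K ι) : phi K b (EE K b a) = NN K b (phi K b a) := by
  let S : LieSubalgebra K (FreeLieAlgebra K ι) :=
    { carrier := {a | phi K b (EE K b a) = NN K b (phi K b a)}
      add_mem' := fun {x y} hx hy => by
        simp only [Set.mem_setOf_eq] at *
        rw [map_add (EE K b), map_add (phi K b), map_add (phi K b), map_add, hx, hy]
      zero_mem' := by
        simp only [Set.mem_setOf_eq, map_zero (EE K b), map_zero (phi K b), map_zero]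
      smul_mem' := fun t x hx => by
        simp only [Set.mem_setOf_eq] at *
        rw [map_smul (EE K b), map_smul (phi K b), map_smul (phi K b), map_smul, hx]
      lie_mem' := fun {x y} hx hy => by
        simp only [Set.mem_setOf_eq] at hx hy
        show phi K b (EE K b ⁅x, y⁆) = NN K b (phi K b ⁅x, y⁆)
        rw [EE_lie, map_add (phi K b), LieHom.map_lie, LieHom.map_lie, hx, hy,
          LieHom.map_lie, NN_lie] }
  refine lie_gen K (S := S) (fun i => ?_) a
  show phi K b (EE K b (FreeLieAlgebra.of K i)) = NN K b (phi K b (FreeLieAlgebra.of K i))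
  rw [EE_of, phi_of, NN_iota]

end Stmt17

namespace Stmt17

/-- pure Lie bracket words of a given length -/
inductive IsBrk (K : Type*) (ι : Type*) [Field K] : ℕ → FreeLieAlgebra K ι → Prop
  | of (i : ι) : IsBrk K ι 1 (FreeLieAlgebra.of K i)
  | lie {p q : ℕ} {x y : FreeLieAlgebra K ι} :
      IsBrk K ι p x → IsBrk K ι q y → IsBrk K ι (p + q) ⁅x, y⁆

variable (K : Type*) [Field K] [CharZero K] {V : Type*} [AddCommGroup V] [Module K V]
  {ι : Type*} (b : Module.Basis ι K V)

lemma isBrk_ne_zero {n : ℕ} {x : FreeLieAlgebra K ι} (h : IsBrk K ι n x) : n ≠ 0 := by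
  induction h with
  | of i => exact one_ne_zero
  | lie hp hq ihp ihq => positivity

noncomputable def WW (n : ℕ) : Submodule K (FreeLieAlgebra K ι) :=
  Submodule.span K {x | IsBrk K ι n x}

lemma EE_isBrk {n : ℕ} {x : FreeLieAlgebra K ι} (h : IsBrk K ι n x) :
    EE K b x = (n : K) • x := by
  induction h with
  | of i => rw [EE_of]; simp
  | @lie p q x y hp hq ihp ihq =>
    rw [EE_lie, ihp, ihq, smul_lie, lie_smul (q : K) x y]
    push_cast
    rw [add_smul]

lemma EE_eigen {n : ℕ} {x : FreeLieAlgebra K ι} (hx : x ∈ WW K n) :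
    EE K b x = (n : K) • x := by
  induction hx using Submodule.span_induction with
  | mem x hx => exact EE_isBrk K b hx
  | zero => simp
  | add x y _ _ hx hy => rw [map_add, hx, hy, smul_add]
  | smul c x _ hx => rw [map_smul, hx, smul_comm]

lemma WW_zero : WW K (ι := ι) 0 = ⊥ := by
  rw [WW, show {x : FreeLieAlgebra K ι | IsBrk K ι 0 x} = ∅ from ?_, Submodule.span_empty]
  ext x
  simp only [Set.mem_setOf_eq, Set.mem_empty_iff_false, iff_false]
  exact fun h => isBrk_ne_zero K h rfl

lemma lie_WW {p q : ℕ} {x y : FreeLieAlgebra K ι} (hx : x ∈ WW K p) (hy : y ∈ WW K q) :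
    ⁅x, y⁆ ∈ WW K (p + q) := by
  induction hx using Submodule.span_induction with
  | mem x hx =>
    induction hy using Submodule.span_induction with
    | mem y hy => exact Submodule.subset_span (IsBrk.lie hx hy)
    | zero => rw [lie_zero]; exact Submodule.zero_mem _
    | add y z _ _ hy hz => rw [lie_add]; exact Submodule.add_mem _ hy hz
    | smul c y _ hy => rw [lie_smul]; exact Submodule.smul_mem _ _ hy
  | zero => rw [zero_lie]; exact Submodule.zero_mem _
  | add x z _ _ hx hz => rw [add_lie]; exact Submodule.add_mem _ hx hz
  | smul c x _ hx => rw [smul_lie]; exact Submodule.smul_mem _ _ hx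

lemma mem_iSup_WW (a : FreeLieAlgebra K ι) : a ∈ ⨆ n, WW K (ι := ι) n := by
  let S : LieSubalgebra K (FreeLieAlgebra K ι) :=
    { toSubmodule := ⨆ n, WW K (ι := ι) n
      lie_mem' := by
        intro x y hx hy
        refine Submodule.iSup_induction (x := x) _ hx (fun p x hxp => ?_)
          (by rw [zero_lie]; exact Submodule.zero_mem _)
          (fun u v hu hv => by rw [add_lie]; exact Submodule.add_mem _ hu hv)
        refine Submodule.iSup_induction (x := y) _ hy (fun q y hyq => ?_)
          (by rw [lie_zero]; exact Submodule.zero_mem _)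
          (fun u v hu hv => by rw [lie_add]; exact Submodule.add_mem _ hu hv)
        exact Submodule.mem_iSup_of_mem (p + q) (lie_WW K hxp hyq) }
  refine lie_gen K (S := S) (fun i => ?_) a
  exact Submodule.mem_iSup_of_mem 1 (Submodule.subset_span (IsBrk.of i))

lemma supW_invariant (s : Finset ℕ) (x : FreeLieAlgebra K ι)
    (hx : x ∈ s.sup (WW K (ι := ι))) : EE K b x ∈ s.sup (WW K (ι := ι)) := by
  classical
  induction s using Finset.induction_on generalizing x with
  | empty =>
    simp only [Finset.sup_empty, Submodule.mem_bot] at hx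
    rw [hx, map_zero]
    exact Submodule.zero_mem _
  | @insert j t hj ih =>
    rw [Finset.sup_insert] at hx ⊢
    obtain ⟨w, hw, r, hr, rfl⟩ := Submodule.mem_sup.mp hx
    rw [map_add]
    refine Submodule.add_mem _ (Submodule.mem_sup_left ?_) (Submodule.mem_sup_right (ih r hr))
    rw [EE_eigen K b hw]
    exact Submodule.smul_mem _ _ hw

lemma eig_zero (s : Finset ℕ) : ∀ a ∈ s.sup (WW K (ι := ι)), EE K b a = 0 → a = 0 := by
  classical
  induction s using Finset.induction_on with
  | empty => intro a ha _; simpa using ha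
  | @insert j t hj ih =>
    intro a ha h0
    rw [Finset.sup_insert] at ha
    obtain ⟨w, hw, r, hr, rfl⟩ := Submodule.mem_sup.mp ha
    rcases eq_or_ne j 0 with hj0 | hj0
    · subst hj0
      rw [WW_zero, Submodule.mem_bot] at hw
      subst hw
      rw [zero_add] at h0 ⊢
      exact ih r hr h0
    · have hEw : EE K b w = (j : K) • w := EE_eigen K b hw
      have hsum : (j : K) • w + EE K b r = 0 := by rw [← hEw, ← map_add]; exact h0
      have hEr : EE K b r = -((j : K) • w) := eq_neg_of_add_eq_zero_right hsum
      set r' := EE K b r - (j : K) • r with hrdef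
      have hr'mem : r' ∈ t.sup (WW K (ι := ι)) :=
        Submodule.sub_mem _ (supW_invariant K b t r hr) (Submodule.smul_mem _ _ hr)
      have hr'eq : r' = -((j : K) • (w + r)) := by rw [hrdef, hEr, smul_add]; abel
      have hEr' : EE K b r' = 0 := by
        rw [hr'eq, map_neg, map_smul, h0, smul_zero, neg_zero]
      have hzz := ih r' hr'mem hEr'
      rw [hr'eq, neg_eq_zero] at hzz
      have hjK : (j : K) ≠ 0 := Nat.cast_ne_zero.mpr hj0
      exact (smul_eq_zero.mp hzz).resolve_left hjK

lemma phi_injective : Function.Injective (phi K b) := by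
  have key : ∀ a : FreeLieAlgebra K ι, phi K b a = 0 → a = 0 := by
    intro a ha
    have hE : EE K b a = 0 := by rw [EE_apply, ha, map_zero]
    have hmem : a ∈ ⨆ n, WW K (ι := ι) n := mem_iSup_WW K a
    obtain ⟨s, hs⟩ := Submodule.mem_iSup_iff_exists_finset.mp hmem
    rw [← Finset.sup_eq_iSup] at hs
    exact eig_zero K b s a hs hE
  intro a1 a2 h
  have h2 : phi K b (a1 - a2) = 0 := by rw [map_sub (phi K b), h, sub_self]
  exact sub_eq_zero.mp (key _ h2)

/-! ### The grading of the tensor algebra -/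

noncomputable def Gr (n : ℕ) : Submodule K (TensorAlgebra K V) :=
  Submodule.span K (⇑(BB K b) '' {w | w.toList.length = n})

lemma NN_eigen {n : ℕ} {x : TensorAlgebra K V} (hx : x ∈ Gr K b n) :
    NN K b x = (n : K) • x := by
  induction hx using Submodule.span_induction with
  | mem x hx =>
    obtain ⟨w, hw, rfl⟩ := hx
    rw [NN_BB, hw]
  | zero => simp
  | add x y _ _ hx hy => rw [map_add, hx, hy, smul_add]
  | smul c x _ hx => rw [map_smul, hx, smul_comm]

lemma eps_Gr {n : ℕ} (hn : n ≠ 0) {x : TensorAlgebra K V} (hx : x ∈ Gr K b n) :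
    taCounit K V x = 0 := by
  induction hx using Submodule.span_induction with
  | mem x hx =>
    obtain ⟨w, hw, rfl⟩ := hx
    refine eps_BB_ne_one K b w (fun hc => hn ?_)
    rw [← hw, hc]
    rfl
  | zero => exact map_zero _
  | add x y _ _ hx hy => rw [map_add, hx, hy, add_zero]
  | smul c x _ hx => rw [map_smul, hx, smul_zero]

lemma Gr_zero {x : TensorAlgebra K V} (hx : x ∈ Gr K b 0) :
    ∃ c : K, x = c • 1 := by
  have himg : ⇑(BB K b) '' {w | w.toList.length = 0} = {(1 : TensorAlgebra K V)} := by
    ext y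
    constructor
    · rintro ⟨w, hw, rfl⟩
      have : w = 1 := FreeMonoid.toList.injective (List.length_eq_zero_iff.mp hw)
      rw [this, BB_one]
      rfl
    · rintro rfl
      exact ⟨1, by simp [show FreeMonoid.toList (1 : FreeMonoid ι) = [] from rfl], BB_one K b⟩
  rw [Gr, himg] at hx
  obtain ⟨c, hc⟩ := Submodule.mem_span_singleton.mp hx
  exact ⟨c, hc.symm⟩

lemma mem_iSup_Gr (x : TensorAlgebra K V) : x ∈ ⨆ n, Gr K b n := by
  have : (⊤ : Submodule K (TensorAlgebra K V)) ≤ ⨆ n, Gr K b n := by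
    rw [← (BB K b).span_eq]
    rw [Submodule.span_le]
    rintro y ⟨w, rfl⟩
    exact Submodule.mem_iSup_of_mem w.toList.length
      (Submodule.subset_span ⟨w, rfl, rfl⟩)
  exact this trivial

lemma supGr_invariant (s : Finset ℕ) (x : TensorAlgebra K V)
    (hx : x ∈ s.sup (Gr K b)) : NN K b x ∈ s.sup (Gr K b) := by
  classical
  induction s using Finset.induction_on generalizing x with
  | empty =>
    simp only [Finset.sup_empty, Submodule.mem_bot] at hx
    rw [hx, map_zero]
    exact Submodule.zero_mem _
  | @insert j t hj ih =>
    rw [Finset.sup_insert] at hx ⊢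
    obtain ⟨w, hw, r, hr, rfl⟩ := Submodule.mem_sup.mp hx
    rw [map_add]
    refine Submodule.add_mem _ (Submodule.mem_sup_left ?_) (Submodule.mem_sup_right (ih r hr))
    rw [NN_eigen K b hw]
    exact Submodule.smul_mem _ _ hw

lemma eps_NN (x : TensorAlgebra K V) : taCounit K V (NN K b x) = 0 := by
  have hx : x ∈ (⊤ : Submodule K (TensorAlgebra K V)) := trivial
  rw [← (BB K b).span_eq] at hx
  induction hx using Submodule.span_induction with
  | mem x hx =>
    obtain ⟨w, rfl⟩ := hx
    rw [NN_BB, map_smul]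
    rcases eq_or_ne w.toList [] with h | h
    · rw [h]
      simp
    · rw [eps_BB_ne_one K b w h, smul_zero]
  | zero => rw [map_zero, map_zero]
  | add x y _ _ hx hy => rw [map_add, map_add, hx, hy, add_zero]
  | smul c x _ hx => rw [map_smul, map_smul, hx, smul_zero]

noncomputable def RR : Submodule K (TensorAlgebra K V) :=
  LinearMap.range ((phi K b : FreeLieAlgebra K ι →ₗ[K] TensorAlgebra K V))

lemma RR_NN_invariant {x : TensorAlgebra K V} (hx : x ∈ RR K b) : NN K b x ∈ RR K b := by
  obtain ⟨a, rfl⟩ := hx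
  refine ⟨EE K b a, ?_⟩
  show phi K b (EE K b a) = NN K b (phi K b a)
  exact phi_EE K b a

lemma eps_supGr (t : Finset ℕ) (h0 : 0 ∉ t) :
    ∀ r ∈ t.sup (Gr K b), taCounit K V r = 0 := by
  classical
  induction t using Finset.induction_on with
  | empty =>
    intro r hr
    simp only [Finset.sup_empty, Submodule.mem_bot] at hr
    rw [hr, map_zero]
  | @insert m u hm ihu =>
    intro r hr
    rw [Finset.sup_insert] at hr
    obtain ⟨w2, hw2, r2, hr2, rfl⟩ := Submodule.mem_sup.mp hr
    have hm0 : m ≠ 0 := fun hc => h0 (hc ▸ Finset.mem_insert_self m u)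
    rw [map_add, eps_Gr K b hm0 hw2, zero_add]
    exact ihu (fun hc => h0 (Finset.mem_insert_of_mem hc)) r2 hr2

lemma prim_mem_RR_aux (s : Finset ℕ) :
    ∀ x ∈ s.sup (Gr K b), taCounit K V x = 0 → NN K b x ∈ RR K b → x ∈ RR K b := by
  classical
  induction s using Finset.induction_on with
  | empty =>
    intro x hx _ _
    simp only [Finset.sup_empty, Submodule.mem_bot] at hx
    rw [hx]
    exact Submodule.zero_mem _
  | @insert j t hj ih =>
    intro x hx heps hNN
    rw [Finset.sup_insert] at hx
    obtain ⟨w, hw, r, hr, rfl⟩ := Submodule.mem_sup.mp hx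
    rcases eq_or_ne j 0 with hj0 | hj0
    · subst hj0
      obtain ⟨c, rfl⟩ := Gr_zero K b hw
      have hepsr : taCounit K V r = 0 := eps_supGr K b t hj r hr
      have hc : c = 0 := by
        rw [map_add, map_smul, eps_one, hepsr, add_zero, smul_eq_mul, mul_one] at heps
        exact heps
      rw [hc, zero_smul, zero_add] at hNN ⊢
      exact ih r hr hepsr hNN
    · -- j ≠ 0
      set x := w + r with hxdef
      set x' := NN K b x - (j : K) • x with hx'def
      have hx'mem : x' ∈ t.sup (Gr K b) := by
        have h1 : NN K b x - (j : K) • x = (NN K b r - (j : K) • r) := by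
          rw [hxdef, map_add, NN_eigen K b hw, smul_add]
          abel
        rw [hx'def, h1]
        exact Submodule.sub_mem _ (supGr_invariant K b t r hr) (Submodule.smul_mem _ _ hr)
      have hx'eps : taCounit K V x' = 0 := by
        rw [hx'def, map_sub, eps_NN, map_smul, heps, smul_zero, sub_zero]
      have hx'NN : NN K b x' ∈ RR K b := by
        rw [hx'def, map_sub, map_smul]
        exact Submodule.sub_mem _ (RR_NN_invariant K b hNN) (Submodule.smul_mem _ _ hNN)
      have hx'R : x' ∈ RR K b := ih x' hx'mem hx'eps hx'NN
      have hjx : (j : K) • x ∈ RR K b := by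
        have : (j : K) • x = NN K b x - x' := by rw [hx'def]; abel
        rw [this]
        exact Submodule.sub_mem _ hNN hx'R
      have hjK : (j : K) ≠ 0 := Nat.cast_ne_zero.mpr hj0
      have := Submodule.smul_mem (RR K b) (j : K)⁻¹ hjx
      rwa [inv_smul_smul₀ hjK] at this

lemma prim_mem_RR (x : TensorAlgebra K V)
    (hx : taComul K V x = x ⊗ₜ[K] 1 + 1 ⊗ₜ[K] x) : x ∈ RR K b := by
  have heps : taCounit K V x = 0 := eps_of_primitive K x hx
  have hNN : NN K b x ∈ RR K b := by
    have h1 : phi K b (DD K b x) = cSN K b (taComul K V x) := phiDD_eq_cSN K b x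
    rw [hx, map_add, cSN_tmul, cSN_tmul, NN_one, mul_zero, SS_one, one_mul, zero_add] at h1
    exact ⟨DD K b x, h1⟩
  obtain ⟨s, hs⟩ := Submodule.mem_iSup_iff_exists_finset.mp (mem_iSup_Gr K b x)
  rw [← Finset.sup_eq_iSup] at hs
  exact prim_mem_RR_aux K b s x hs heps hNN

lemma phi_primitive (a : FreeLieAlgebra K ι) :
    taComul K V (phi K b a) = phi K b a ⊗ₜ[K] 1 + 1 ⊗ₜ[K] phi K b a := by
  let S : LieSubalgebra K (FreeLieAlgebra K ι) :=
    { carrier := {a | taComul K V (phi K b a) = phi K b a ⊗ₜ[K] 1 + 1 ⊗ₜ[K] phi K b a}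
      add_mem' := fun {x y} hx hy => by
        simp only [Set.mem_setOf_eq] at *
        rw [map_add (phi K b), map_add, hx, hy, TensorProduct.add_tmul, TensorProduct.tmul_add]
        abel
      zero_mem' := by simp only [Set.mem_setOf_eq, map_zero (phi K b), map_zero]; simp
      smul_mem' := fun c x hx => by
        simp only [Set.mem_setOf_eq] at *
        rw [map_smul (phi K b), map_smul, hx]
        simp [smul_add, TensorProduct.smul_tmul', TensorProduct.tmul_smul]
      lie_mem' := fun {x y} hx hy => by
        simp only [Set.mem_setOf_eq] at hx hy
        show taComul K V (phi K b ⁅x, y⁆) = _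
        rw [LieHom.map_lie, Ring.lie_def, map_sub, map_mul, map_mul, hx, hy]
        simp only [add_mul, mul_add, Algebra.TensorProduct.tmul_mul_tmul, one_mul, mul_one,
          Ring.lie_def, TensorProduct.sub_tmul, TensorProduct.tmul_sub]
        abel }
  refine lie_gen K (S := S) (fun i => ?_) a
  show taComul K V (phi K b (FreeLieAlgebra.of K i)) = _
  rw [phi_of, comul_iota]

end Stmt17

/-- The canonical Lie algebra morphism from the free Lie algebra on `V`
(presented as the free Lie algebra on a basis of `V`) to `T(V)` — equipped with the
commutator bracket — induced by the inclusion of `V` into `T(V)`, is injective and its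
image is exactly `Prim(T(V))`.  In particular `Prim(T(V))` is isomorphic to the free Lie
algebra generated by `V`. -/
theorem statement17 {K V : Type*} [Field K] [CharZero K] [AddCommGroup V] [Module K V]
    {ι : Type*} (b : Module.Basis ι K V) :
    Function.Injective
      ⇑(FreeLieAlgebra.lift K (fun i : ι => TensorAlgebra.ι K (b i)))
    ∧ Set.range ⇑(FreeLieAlgebra.lift K (fun i : ι => TensorAlgebra.ι K (b i)))
        = {x : TensorAlgebra K V |
            taComul K V x = x ⊗ₜ[K] (1 : TensorAlgebra K V)
              + (1 : TensorAlgebra K V) ⊗ₜ[K] x} := by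
  constructor
  · exact Stmt17.phi_injective K b
  · ext x
    simp only [Set.mem_setOf_eq, Set.mem_range]
    constructor
    · rintro ⟨a, rfl⟩
      exact Stmt17.phi_primitive K b a
    · intro hx
      obtain ⟨a, ha⟩ := Stmt17.prim_mem_RR K b x hx
      exact ⟨a, ha⟩
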